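/- With notation as above, the coheight of a join-irreducible element c in P₁ (the maximal length of a chain in P₁ ascending from c) equals p + q where φ(c) = (p, q). -/

import Mathlib

/-- Membership in the distributive lattice `D₁` of strictly increasing `k`-tuples
`(c₁,…,c_k)` with `1 ≤ cᵢ ≤ u` and `cᵢ ≥ aᵢ`, ordered componentwise. -/
def memD1 {k : ℕ} (u : ℕ) (a c : Fin k → ℕ) : Prop :=
  StrictMono c ∧ (∀ i, 1 ≤ c i) ∧ (∀ i, c i ≤ u) ∧ ∀ i, a i ≤ c i

/-- Join-irreducibility in `D₁`. -/
def joinIrredD1 {k : ℕ} (u : ℕ) (a c : Fin k → ℕ) : Prop :=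
  memD1 u a c ∧ c ≠ a ∧
    ∀ d e : Fin k → ℕ, memD1 u a d → memD1 u a e → c = d ⊔ e → c = d ∨ c = e

/-- The condition singling out the unique index `i` of a join-irreducible element. -/
def specialIdx {k : ℕ} (a c : Fin k → ℕ) (i : Fin k) : Prop :=
  a i < c i ∧ ∀ j : Fin k, (j : ℕ) + 1 = (i : ℕ) → c j + 1 < c i

/-- The coheight of `c` in the poset `P₁` of join-irreducible elements of `D₁`:
the maximal `m` such that there is a chain `c = x₀ < x₁ < ⋯ < x_m` in `P₁`. -/
noncomputable def coheightP1 {k : ℕ} (u : ℕ) (a c : Fin k → ℕ) : ℕ :=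
  sSup {m : ℕ | ∃ f : Fin (m + 1) → (Fin k → ℕ),
    f 0 = c ∧ (∀ t, joinIrredD1 u a (f t)) ∧ StrictMono f}


namespace CHP

/-- strict monotonicity from adjacent comparisons, for `Fin`-indexed families. -/
lemma strictMono_fin {n : ℕ} {α : Type*} [Preorder α] {f : Fin n → α}
    (h : ∀ m (hm : m + 1 < n), f ⟨m, Nat.lt_of_succ_lt hm⟩ < f ⟨m+1, hm⟩) :
    StrictMono f := by
  have key : ∀ (d j1 j2 : ℕ) (h1 : j1 < n) (h2 : j2 < n), j1 + d + 1 = j2 →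
      f ⟨j1, h1⟩ < f ⟨j2, h2⟩ := by
    intro d
    induction d with
    | zero =>
      intro j1 j2 h1 h2 he
      obtain rfl : j2 = j1 + 1 := by omega
      exact h j1 h2
    | succ d ih =>
      intro j1 j2 h1 h2 he
      have h3 : j1 + d + 1 < n := by omega
      refine lt_trans (ih j1 (j1 + d + 1) h1 h3 rfl) ?_
      obtain rfl : j2 = (j1 + d + 1) + 1 := by omega
      exact h _ h2
  intro j1 j2 hlt
  have hl : (j1 : ℕ) < (j2 : ℕ) := hlt
  have he : (j1 : ℕ) + ((j2:ℕ) - (j1:ℕ) - 1) + 1 = (j2:ℕ) := by omega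
  have := key _ _ _ j1.isLt j2.isLt he
  simpa using this

lemma fin_gap_nat {n : ℕ} {f : Fin n → ℕ} (hf : StrictMono f) :
    ∀ (d : ℕ) (j1 j2 : Fin n), (j1:ℕ) + d = (j2:ℕ) → f j1 + d ≤ f j2 := by
  intro d
  induction d with
  | zero =>
    intro j1 j2 h
    have : j1 = j2 := Fin.ext (by omega)
    simp [this]
  | succ d ih =>
    intro j1 j2 h
    have h1 : (j1:ℕ) + d < n := by have := j2.isLt; omega
    have h2 := ih j1 ⟨(j1:ℕ)+d, h1⟩ rfl
    have h3 : (⟨(j1:ℕ)+d, h1⟩ : Fin n) < j2 := by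
      simp only [Fin.lt_def]; omega
    have := hf h3
    omega

lemma fin_gap_int {n : ℕ} {f : Fin n → ℤ} (hf : StrictMono f) :
    ∀ (d : ℕ) (j1 j2 : Fin n), (j1:ℕ) + d = (j2:ℕ) → f j1 + d ≤ f j2 := by
  intro d
  induction d with
  | zero =>
    intro j1 j2 h
    have : j1 = j2 := Fin.ext (by omega)
    simp [this]
  | succ d ih =>
    intro j1 j2 h
    have h1 : (j1:ℕ) + d < n := by have := j2.isLt; omega
    have h2 := ih j1 ⟨(j1:ℕ)+d, h1⟩ rfl
    have h3 : (⟨(j1:ℕ)+d, h1⟩ : Fin n) < j2 := by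
      simp only [Fin.lt_def]; omega
    have := hf h3
    push_cast at h2 ⊢
    omega

variable {k u : ℕ} {a c : Fin k → ℕ}

/-- decreasing the special coordinate by one stays in `D₁`. -/
lemma update_mem (ha1 : ∀ i, 1 ≤ a i) (hm : memD1 u a c) {t : Fin k}
    (ht : specialIdx a c t) :
    memD1 u a (fun j => if j = t then c t - 1 else c j) := by
  obtain ⟨hsm, h1, hu, hac⟩ := hm
  have hct : a t + 1 ≤ c t := ht.1
  refine ⟨?_, ?_, ?_, ?_⟩
  · intro p q hpq
    have hpq' : (p:ℕ) < (q:ℕ) := hpq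
    by_cases hp : p = t <;> by_cases hq : q = t <;> simp [hp, hq]
    · omega
    · -- p = t, q ≠ t : c t - 1 < c q
      have h2 : c t < c q := by rw [← hp]; exact hsm hpq
      omega
    · -- q = t : c p < c t - 1
      rcases Nat.lt_or_ge ((p:ℕ) + 1) (t:ℕ) with hcase | hcase
      · have hint : (p:ℕ) + 1 < k := by have := t.isLt; omega
        have h2 : (⟨(p:ℕ)+1, hint⟩ : Fin k) < t := by simp [Fin.lt_def]; omega
        have h3 : p < (⟨(p:ℕ)+1, hint⟩ : Fin k) := by simp [Fin.lt_def]
        have := hsm h2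
        have := hsm h3
        omega
      · have hpe : (p:ℕ) + 1 = (t:ℕ) := by
          have : (p:ℕ) < (t:ℕ) := by rw [← hq]; exact hpq'
          omega
        have := ht.2 p hpe
        omega
    · exact hsm hpq
  · intro j
    by_cases hj : j = t <;> simp [hj]
    · have := ha1 t; omega
    · exact h1 j
  · intro j
    by_cases hj : j = t <;> simp [hj]
    · have := hu t; omega
    · exact hu j
  · intro j
    by_cases hj : j = t <;> simp [hj]
    · omega
    · exact hac j

/-- the special index of a join-irreducible element is unique. -/
lemma special_unique (ha1 : ∀ i, 1 ≤ a i) (hc : joinIrredD1 u a c) {i j : Fin k}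
    (hi : specialIdx a c i) (hj : specialIdx a c j) : j = i := by
  by_contra hne
  have hc1 := hc.1.2.1
  have hsup : c = (fun j' => if j' = j then c j - 1 else c j') ⊔
      (fun j' => if j' = i then c i - 1 else c j') := by
    funext j'
    simp only [Pi.sup_apply]
    by_cases h1 : j' = j <;> by_cases h2 : j' = i <;> simp [h1, h2]
    · exact absurd (h1 ▸ h2) hne
    · rw [if_neg hne, Nat.max_eq_right (Nat.sub_le _ _)]
    · rw [if_neg (by intro h; exact hne h.symm),
        Nat.max_eq_left (Nat.sub_le _ _)]
  rcases hc.2.2 _ _ (update_mem ha1 hc.1 hj) (update_mem ha1 hc.1 hi) hsup with h | h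
  · have h2 := congrFun h j
    rw [if_pos rfl] at h2
    have := hj.1
    have := hc1 j
    omega
  · have h2 := congrFun h i
    rw [if_pos rfl] at h2
    have := hi.1
    have := hc1 i
    omega

/-- below the special index, a join-irreducible element agrees with `a`. -/
lemma struct_lt (ha : StrictMono a) (ha1 : ∀ i, 1 ≤ a i) (hc : joinIrredD1 u a c)
    {i : Fin k} (hi : specialIdx a c i) :
    ∀ n (hn : n < k), n < (i:ℕ) → c ⟨n, hn⟩ = a ⟨n, hn⟩ := by
  intro n
  induction n using Nat.strong_induction_on with
  | _ n ih =>
    intro hn hni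
    have hac := hc.1.2.2.2 ⟨n, hn⟩
    by_contra hne
    have hlt : a ⟨n, hn⟩ < c ⟨n, hn⟩ := lt_of_le_of_ne hac (fun h => hne h.symm)
    have hsp : specialIdx a c ⟨n, hn⟩ := by
      refine ⟨hlt, ?_⟩
      intro j' hj'
      have hj'' : (j':ℕ) + 1 = n := by simpa using hj'
      have h1 : c j' = a j' := by
        have := ih (j':ℕ) (by omega) j'.isLt (by omega)
        simpa using this
      have h2 : a j' < a ⟨n, hn⟩ := ha (by rw [Fin.lt_def]; simp; omega)
      omega
    have := special_unique ha1 hc hi hsp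
    rw [Fin.ext_iff] at this
    simp at this
    omega

/-- above the special index, a join-irreducible element satisfies the
max-recursion. -/
lemma struct_gt (ha1 : ∀ i, 1 ≤ a i) (hc : joinIrredD1 u a c)
    {i : Fin k} (hi : specialIdx a c i) :
    ∀ n (hn : n < k), (i:ℕ) < n →
      c ⟨n, hn⟩ = max (a ⟨n, hn⟩) (c ⟨n - 1, by omega⟩ + 1) := by
  intro n hn hni
  have hac := hc.1.2.2.2 ⟨n, hn⟩
  have hprev : c ⟨n - 1, by omega⟩ < c ⟨n, hn⟩ := hc.1.1 (by simp [Fin.lt_def]; omega)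
  have hle : c ⟨n, hn⟩ ≤ max (a ⟨n, hn⟩) (c ⟨n - 1, by omega⟩ + 1) := by
    by_contra hgt
    push_neg at hgt
    have hg1 : a ⟨n, hn⟩ < c ⟨n, hn⟩ :=
      lt_of_le_of_lt (le_max_left _ (c ⟨n - 1, by omega⟩ + 1)) hgt
    have hg2 : c ⟨n - 1, by omega⟩ + 1 < c ⟨n, hn⟩ :=
      lt_of_le_of_lt (le_max_right (a ⟨n, hn⟩) _) hgt
    have hsp : specialIdx a c ⟨n, hn⟩ := by
      refine ⟨hg1, ?_⟩
      intro j' hj'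
      have hj'' : (j':ℕ) + 1 = n := by simpa using hj'
      have : j' = (⟨n - 1, by omega⟩ : Fin k) := Fin.ext (by simp; omega)
      rw [this]
      exact hg2
    have := special_unique ha1 hc hi hsp
    rw [Fin.ext_iff] at this
    simp at this
    omega
  rcases Nat.le_total (a ⟨n, hn⟩) (c ⟨n - 1, by omega⟩ + 1) with hm | hm
  · rw [Nat.max_eq_right hm]; omega
  · rw [Nat.max_eq_left hm]; omega

/-- every join-irreducible element has a special index. -/
lemma exists_special (ha : StrictMono a) (hx : joinIrredD1 u a c) :
    ∃ i, specialIdx a c i := by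
  have hac := hx.1.2.2.2
  obtain ⟨j0, hj0⟩ := Function.ne_iff.1 hx.2.1
  have hS : j0 ∈ Finset.univ.filter (fun j => a j < c j) := by
    simp [lt_of_le_of_ne (hac j0) (fun h => hj0 h.symm)]
  have hSne : (Finset.univ.filter (fun j => a j < c j)).Nonempty := ⟨j0, hS⟩
  refine ⟨(Finset.univ.filter (fun j => a j < c j)).min' hSne, ?_, ?_⟩
  · exact (Finset.mem_filter.1 (Finset.min'_mem _ hSne)).2
  · intro j' hj'
    have hmem : a _ < c _ := (Finset.mem_filter.1 (Finset.min'_mem _ hSne)).2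
    have hj'm : j' < (Finset.univ.filter (fun j => a j < c j)).min' hSne := by
      rw [Fin.lt_def]; omega
    have hj'S : j' ∉ Finset.univ.filter (fun j => a j < c j) := fun hmem' =>
      absurd (Finset.min'_le _ j' hmem') (not_le.2 hj'm)
    have h1 : c j' = a j' := by
      by_contra hne
      exact hj'S (Finset.mem_filter.2 ⟨Finset.mem_univ _,
        lt_of_le_of_ne (hac j') (fun h => hne h.symm)⟩)
    have h2 : a j' < a _ := ha hj'm
    omega

/-- a join-irreducible element is determined by its special index and the value
there. -/
lemma eq_of_special (ha : StrictMono a) (ha1 : ∀ i, 1 ≤ a i)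
    {y : Fin k → ℕ} (hc : joinIrredD1 u a c) {i : Fin k} (hi : specialIdx a c i)
    (hy : joinIrredD1 u a y) (hiy : specialIdx a y i) (hv : c i = y i) : c = y := by
  have key : ∀ n (hn : n < k), c ⟨n, hn⟩ = y ⟨n, hn⟩ := by
    intro n
    induction n using Nat.strong_induction_on with
    | _ n ih =>
      intro hn
      rcases lt_trichotomy n (i:ℕ) with h | h | h
      · rw [struct_lt ha ha1 hc hi n hn h, struct_lt ha ha1 hy hiy n hn h]
      · have : (⟨n, hn⟩ : Fin k) = i := Fin.ext (by simpa using h)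
        rw [this]; exact hv
      · rw [struct_gt ha1 hc hi n hn h, struct_gt ha1 hy hiy n hn h,
          ih (n-1) (by omega) (by omega)]
  funext j
  have := key (j:ℕ) j.isLt
  simpa using this

/-- key comparison lemma: if `x ≤ y` and the special index of `y` is below that
of `x`, then the special value of `x` is controlled. -/
lemma lemA (ha : StrictMono a) (ha1 : ∀ i, 1 ≤ a i) {x y : Fin k → ℕ}
    (hx : joinIrredD1 u a x) {ix : Fin k} (hix : specialIdx a x ix)
    (hy : joinIrredD1 u a y) {iy : Fin k} (hiy : specialIdx a y iy)
    (hle : x ≤ y) (hlt : (iy:ℕ) < (ix:ℕ)) :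
    x ix ≤ y iy + ((ix:ℕ) - (iy:ℕ)) := by
  have hxsm := hx.1.1
  have hxa := hx.1.2.2.2
  have key : ∀ r, r ≤ (ix:ℕ) - (iy:ℕ) → ∀ (h2 : (ix:ℕ) - r < k),
      x ix ≤ y ⟨(ix:ℕ) - r, h2⟩ + r := by
    intro r
    induction r with
    | zero =>
      intro _ h2
      have e : (⟨(ix:ℕ) - 0, h2⟩ : Fin k) = ix := Fin.ext (by simp)
      rw [e]
      simpa using hle ix
    | succ r ih =>
      intro hr h2
      have hnk : (ix:ℕ) - r < k := by omega
      have h1 := ih (by omega) hnk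
      by_cases hcase : x ix ≤ a ⟨(ix:ℕ) - r, hnk⟩ + r
      · exfalso
        rcases Nat.eq_zero_or_pos r with hr0 | hr0
        · subst hr0
          have e : (⟨(ix:ℕ) - 0, hnk⟩ : Fin k) = ix := Fin.ext (by simp)
          rw [e] at hcase
          have := hix.1
          omega
        · have hix1 : (ix:ℕ) - 1 < k := by omega
          have hspec : x ⟨(ix:ℕ) - 1, hix1⟩ + 1 < x ix := by
            refine hix.2 _ ?_
            simp
            omega
          have hgap : x ⟨(ix:ℕ) - r, hnk⟩ + (r - 1) ≤ x ⟨(ix:ℕ) - 1, hix1⟩ := by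
            refine fin_gap_nat hxsm (r-1) _ _ ?_
            simp
            omega
          have hxa2 := hxa ⟨(ix:ℕ) - r, hnk⟩
          omega
      · push_neg at hcase
        have hgt := struct_gt ha1 hy hiy ((ix:ℕ) - r) hnk (by omega)
        have e : (⟨(ix:ℕ) - r - 1, by omega⟩ : Fin k) =
            ⟨(ix:ℕ) - (r+1), h2⟩ := Fin.ext (by simp; omega)
        rw [e] at hgt
        rcases Nat.le_total (a ⟨(ix:ℕ) - r, hnk⟩) (y ⟨(ix:ℕ) - (r+1), h2⟩ + 1)
          with hm | hm
        · rw [Nat.max_eq_right hm] at hgt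
          omega
        · rw [Nat.max_eq_left hm] at hgt
          omega
  have hfin : (ix:ℕ) - ((ix:ℕ) - (iy:ℕ)) < k := by have := iy.isLt; omega
  have := key ((ix:ℕ) - (iy:ℕ)) le_rfl hfin
  have e : (⟨(ix:ℕ) - ((ix:ℕ) - (iy:ℕ)), hfin⟩ : Fin k) = iy :=
    Fin.ext (by simp; omega)
  rw [e] at this
  exact this

/-- The weight `v - 2i` strictly increases along `P₁`. -/
lemma W_dec (ha : StrictMono a) (ha1 : ∀ i, 1 ≤ a i) {x y : Fin k → ℕ}
    (hx : joinIrredD1 u a x) {ix : Fin k} (hix : specialIdx a x ix)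
    (hy : joinIrredD1 u a y) {iy : Fin k} (hiy : specialIdx a y iy)
    (hlt : x < y) :
    (x ix : ℤ) - 2 * ((ix:ℕ) : ℤ) < (y iy : ℤ) - 2 * ((iy:ℕ) : ℤ) := by
  have hle : x ≤ y := le_of_lt hlt
  have hne : x ≠ y := ne_of_lt hlt
  rcases lt_trichotomy (ix:ℕ) (iy:ℕ) with h | h | h
  · exfalso
    have h1 : x ix ≤ y ix := hle ix
    have h2 : y ix = a ix := by
      have := struct_lt ha ha1 hy hiy (ix:ℕ) ix.isLt h
      simpa using this
    have := hix.1
    omega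
  · have he : ix = iy := Fin.ext h
    subst he
    have hvy : x ix ≤ y ix := hle ix
    have hne2 : x ix ≠ y ix := fun hv => hne (eq_of_special ha ha1 hx hix hy hiy hv)
    have : x ix < y ix := lt_of_le_of_ne hvy hne2
    omega
  · have := lemA ha ha1 hx hix hy hiy hle h
    omega

/-! ### Explicit join-irreducible elements -/

def Jaux (A : ℕ → ℕ) (i v : ℕ) : ℕ → ℕ
  | 0 => if i = 0 then v else A 0
  | (n+1) => if n + 1 < i then A (n+1) else if n + 1 = i then v else
      max (A (n+1)) (Jaux A i v n + 1)

lemma Jaux_lt {A : ℕ → ℕ} {i v n : ℕ} (h : n < i) : Jaux A i v n = A n := by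
  cases n with
  | zero => rw [Jaux, if_neg (by omega)]
  | succ m => rw [Jaux, if_pos h]

lemma Jaux_self {A : ℕ → ℕ} {i v : ℕ} : Jaux A i v i = v := by
  cases i with
  | zero => rw [Jaux, if_pos rfl]
  | succ m => rw [Jaux, if_neg (by omega), if_pos rfl]

lemma Jaux_gt {A : ℕ → ℕ} {i v n : ℕ} (h : i < n + 1) :
    Jaux A i v (n+1) = max (A (n+1)) (Jaux A i v n + 1) := by
  rw [Jaux, if_neg (by omega), if_neg (by omega)]

lemma Jaux_mono {A : ℕ → ℕ} {i v v' : ℕ} (h : v ≤ v') :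
    ∀ n, Jaux A i v n ≤ Jaux A i v' n := by
  intro n
  induction n with
  | zero =>
    rcases Nat.eq_zero_or_pos i with h0 | h0
    · subst h0; rw [Jaux_self, Jaux_self]; exact h
    · rw [Jaux_lt h0, Jaux_lt h0]
  | succ n ih =>
    rcases lt_trichotomy (n+1) i with hc | hc | hc
    · rw [Jaux_lt hc, Jaux_lt hc]
    · subst hc; rw [Jaux_self, Jaux_self]; exact h
    · rw [Jaux_gt hc, Jaux_gt hc]
      exact max_le_max le_rfl (by omega)

variable {k u : ℕ}

def Af (a : Fin k → ℕ) : ℕ → ℕ := fun n => if h : n < k then a ⟨n, h⟩ else 0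

def JF (a : Fin k → ℕ) (i : Fin k) (w : ℕ) : Fin k → ℕ :=
  fun j => Jaux (Af a) (i:ℕ) w (j:ℕ)

lemma Af_eq (a : Fin k → ℕ) {n : ℕ} (h : n < k) : Af a n = a ⟨n, h⟩ := dif_pos h

lemma JF_lt {a : Fin k → ℕ} {i : Fin k} {w n : ℕ} (hn : n < k) (h : n < (i:ℕ)) :
    JF a i w ⟨n, hn⟩ = a ⟨n, hn⟩ := by
  show Jaux (Af a) (i:ℕ) w n = _
  rw [Jaux_lt h, Af_eq a hn]

lemma JF_self {a : Fin k → ℕ} {i : Fin k} {w : ℕ} : JF a i w i = w := Jaux_self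

lemma JF_gt {a : Fin k → ℕ} {i : Fin k} {w n : ℕ} (hn : n < k) (h : (i:ℕ) < n) :
    JF a i w ⟨n, hn⟩ = max (a ⟨n, hn⟩) (JF a i w ⟨n - 1, by omega⟩ + 1) := by
  obtain ⟨m, rfl⟩ : ∃ m, n = m + 1 := ⟨n - 1, by omega⟩
  have e : (⟨m + 1 - 1, by omega⟩ : Fin k) = ⟨m, by omega⟩ := Fin.ext (by simp)
  rw [e]
  show Jaux (Af a) (i:ℕ) w (m+1) = _
  rw [Jaux_gt h, Af_eq a hn]
  rfl

variable {a : Fin k → ℕ} {i : Fin k} {w : ℕ}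


variable {a : Fin k → ℕ} {i : Fin k} {w : ℕ}
lemma JF_ge (hw1 : a i ≤ w) : ∀ j, a j ≤ JF a i w j := by
  intro j
  have hj := j.isLt
  rcases lt_trichotomy ((j:ℕ)) ((i:ℕ)) with h | h | h
  · have := JF_lt (a := a) (w := w) hj h
    simp only [Fin.eta] at this
    rw [this]
  · have e : j = i := Fin.ext h
    rw [e, JF_self]
    exact hw1
  · have := JF_gt (a := a) (w := w) hj h
    simp only [Fin.eta] at this
    rw [this]
    exact le_max_left _ _

lemma JF_sm (ha : StrictMono a) (hw1 : a i < w) : StrictMono (JF a i w) := by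
  refine strictMono_fin ?_
  intro n hn
  rcases lt_trichotomy (n+1) ((i:ℕ)) with h | h | h
  · rw [JF_lt hn h, JF_lt (Nat.lt_of_succ_lt hn) (by omega)]
    exact ha (by rw [Fin.lt_def]; simp)
  · have e : (⟨n+1, hn⟩ : Fin k) = i := Fin.ext (by simpa using h)
    rw [e, JF_self, JF_lt (Nat.lt_of_succ_lt hn) (by omega)]
    exact lt_trans (ha (show (⟨n, _⟩ : Fin k) < i by rw [Fin.lt_def]; simp; omega)) hw1
  · rw [JF_gt hn h]
    have e : (⟨n + 1 - 1, by omega⟩ : Fin k) = ⟨n, Nat.lt_of_succ_lt hn⟩ :=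
      Fin.ext (by simp)
    rw [e]
    have := le_max_right (a ⟨n+1, hn⟩) (JF a i w ⟨n, Nat.lt_of_succ_lt hn⟩ + 1)
    omega


lemma JF_le (hau : ∀ j : Fin k, a j + k ≤ u + (j : ℕ) + 1)
    (hw2 : w + k ≤ u + (i:ℕ) + 1) :
    ∀ n (hn : n < k), JF a i w ⟨n, hn⟩ + k ≤ u + n + 1 := by
  intro n
  induction n with
  | zero =>
    intro hn
    rcases Nat.eq_zero_or_pos ((i:ℕ)) with h0 | h0
    · have e : (⟨0, hn⟩ : Fin k) = i := Fin.ext (by simp only [Fin.val_mk]; omega)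
      rw [e, JF_self]
      omega
    · rw [JF_lt hn h0]
      exact hau _
  | succ n ih =>
    intro hn
    rcases lt_trichotomy (n+1) ((i:ℕ)) with h | h | h
    · rw [JF_lt hn h]
      exact hau _
    · have e : (⟨n+1, hn⟩ : Fin k) = i := Fin.ext (by simpa using h)
      rw [e, JF_self]
      omega
    · rw [JF_gt hn h]
      have e : (⟨n + 1 - 1, by omega⟩ : Fin k) = ⟨n, Nat.lt_of_succ_lt hn⟩ :=
        Fin.ext (by simp)
      rw [e]
      have h1 := ih (Nat.lt_of_succ_lt hn)
      have h2 := hau ⟨n+1, hn⟩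
      rcases Nat.le_total (a ⟨n+1, hn⟩) (JF a i w ⟨n, Nat.lt_of_succ_lt hn⟩ + 1)
        with hm | hm
      · rw [Nat.max_eq_right hm]; omega
      · rw [Nat.max_eq_left hm]; exact h2

lemma JF_mem (ha : StrictMono a) (ha1 : ∀ j, 1 ≤ a j)
    (hau : ∀ j : Fin k, a j + k ≤ u + (j : ℕ) + 1)
    (hw1 : a i < w) (hw2 : w + k ≤ u + (i:ℕ) + 1) : memD1 u a (JF a i w) := by
  refine ⟨JF_sm ha hw1, ?_, ?_, JF_ge (le_of_lt hw1)⟩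
  · intro j
    exact le_trans (ha1 j) (JF_ge (le_of_lt hw1) j)
  · intro j
    have := JF_le hau hw2 (j:ℕ) j.isLt
    simp only [Fin.eta] at this
    have := j.isLt
    omega

lemma JF_special (ha : StrictMono a) (hw1 : a i < w) :
    specialIdx a (JF a i w) i := by
  refine ⟨by rw [JF_self]; exact hw1, ?_⟩
  intro j' hj'
  rw [JF_self, JF_lt j'.isLt (by omega)]
  simp only [Fin.eta]
  have : a j' < a i := ha (by rw [Fin.lt_def]; omega)
  omega

lemma JF_irred (ha : StrictMono a) (ha1 : ∀ j, 1 ≤ a j)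
    (hau : ∀ j : Fin k, a j + k ≤ u + (j : ℕ) + 1)
    (hw1 : a i < w) (hw2 : w + k ≤ u + (i:ℕ) + 1) : joinIrredD1 u a (JF a i w) := by
  refine ⟨JF_mem ha ha1 hau hw1 hw2, ?_, ?_⟩
  · intro h
    have := congrFun h i
    rw [JF_self] at this
    omega
  · intro d e hd he hsup
    have hdle : d ≤ JF a i w := hsup ▸ le_sup_left
    have hele : e ≤ JF a i w := hsup ▸ le_sup_right
    have key : ∀ z : Fin k → ℕ, memD1 u a z → z ≤ JF a i w → z i = w →
        z = JF a i w := by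
      intro z hz hzle hzi
      have K : ∀ n (hn : n < k), z ⟨n, hn⟩ = JF a i w ⟨n, hn⟩ := by
        intro n
        induction n using Nat.strong_induction_on with
        | _ n ih =>
          intro hn
          rcases lt_trichotomy n ((i:ℕ)) with h | h | h
          · rw [JF_lt hn h]
            refine le_antisymm ?_ (hz.2.2.2 _)
            have h2 : z ⟨n, hn⟩ ≤ JF a i w ⟨n, hn⟩ := hzle _
            rw [JF_lt hn h] at h2
            exact h2
          · have e' : (⟨n, hn⟩ : Fin k) = i := Fin.ext (by simpa using h)
            rw [e', JF_self, hzi]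
          · rw [JF_gt hn h]
            have h1 : z ⟨n - 1, by omega⟩ = JF a i w ⟨n - 1, by omega⟩ :=
              ih (n-1) (by omega) (by omega)
            have h2 : z ⟨n - 1, by omega⟩ < z ⟨n, hn⟩ :=
              hz.1 (by rw [Fin.lt_def]; simp; omega)
            have h3 : a ⟨n, hn⟩ ≤ z ⟨n, hn⟩ := hz.2.2.2 _
            have h4 : z ⟨n, hn⟩ ≤ JF a i w ⟨n, hn⟩ := hzle _
            rw [JF_gt hn h] at h4
            rcases Nat.le_total (a ⟨n, hn⟩) (JF a i w ⟨n - 1, by omega⟩ + 1)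
              with hm | hm
            · rw [Nat.max_eq_right hm] at h4 ⊢
              omega
            · rw [Nat.max_eq_left hm] at h4 ⊢
              omega
      funext j
      have := K (j:ℕ) j.isLt
      simpa using this
    have hsi : JF a i w i = max (d i) (e i) := by
      have := congrFun hsup i
      simpa [Pi.sup_apply] using this
    rw [JF_self] at hsi
    rcases Nat.le_total (d i) (e i) with hm | hm
    · rw [Nat.max_eq_right hm] at hsi
      exact Or.inr (key e he hele hsi.symm).symm
    · rw [Nat.max_eq_left hm] at hsi
      exact Or.inl (key d hd hdle hsi.symm).symm

lemma JF_top (hau : ∀ j : Fin k, a j + k ≤ u + (j : ℕ) + 1)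
    (hvm : w + k = u + (i:ℕ) + 1) :
    ∀ n (hn : n < k), (i:ℕ) ≤ n → JF a i w ⟨n, hn⟩ + k = u + n + 1 := by
  intro n
  induction n using Nat.strong_induction_on with
  | _ n ih =>
    intro hn hin
    rcases Nat.eq_or_lt_of_le hin with h | h
    · have e : (⟨n, hn⟩ : Fin k) = i := Fin.ext (by simp only [Fin.val_mk]; omega)
      rw [e, JF_self]
      omega
    · rw [JF_gt hn h]
      have h1 := ih (n-1) (by omega) (by omega) (by omega)
      have h2 : a ⟨n, hn⟩ + k ≤ u + n + 1 := hau ⟨n, hn⟩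
      rw [Nat.max_eq_right (by omega)]
      omega

lemma JF_step (hau : ∀ j : Fin k, a j + k ≤ u + (j : ℕ) + 1)
    {i1 i2 : Fin k} (h12 : (i1:ℕ) + 1 = (i2:ℕ)) {w1 w2 : ℕ} (hw : w1 + 1 = w2)
    (hvm2 : w2 + k = u + (i2:ℕ) + 1) (haw : a i1 < w1) :
    JF a i2 w2 < JF a i1 w1 := by
  have hvm1 : w1 + k = u + (i1:ℕ) + 1 := by omega
  have hle : JF a i2 w2 ≤ JF a i1 w1 := by
    intro j
    have hj := j.isLt
    rcases lt_trichotomy ((j:ℕ)) ((i1:ℕ)) with h | h | h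
    · have e1 := JF_lt (a := a) (w := w2) (i := i2) hj (by omega)
      have e2 := JF_lt (a := a) (w := w1) (i := i1) hj h
      simp only [Fin.eta] at e1 e2
      rw [e1, e2]
    · have e : j = i1 := Fin.ext h
      have e1 := JF_lt (a := a) (w := w2) (i := i2) hj (by omega)
      simp only [Fin.eta] at e1
      rw [e1, e]
      rw [JF_self]
      exact haw.le
    · have e1 := JF_top (a := a) hau hvm2 (j:ℕ) hj (by omega)
      have e2 := JF_top (a := a) hau hvm1 (j:ℕ) hj (by omega)
      simp only [Fin.eta] at e1 e2
      exact le_of_eq (Nat.add_right_cancel (e1.trans e2.symm))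
  refine lt_of_le_of_ne hle ?_
  intro hEq
  have := congrFun hEq i1
  rw [JF_self, JF_lt i1.isLt (by omega)] at this
  simp only [Fin.eta] at this
  omega



end CHP


open CHP in
/-- The coheight of a join-irreducible element `c` in `P₁` equals `p + q`,
where `φ(c) = (p, q) = (u - cᵢ - (k - i), i - 1)`. -/
theorem coheight_eq_phi_sum {k u : ℕ} (a : Fin k → ℕ)
    (hk : 1 ≤ k) (hku : k ≤ u) (ha : StrictMono a) (ha1 : ∀ i, 1 ≤ a i)
    (hau : ∀ i : Fin k, a i + k ≤ u + (i : ℕ) + 1)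
    (c : Fin k → ℕ) (hc : joinIrredD1 u a c) (i : Fin k) (hi : specialIdx a c i) :
    (coheightP1 u a c : ℤ) =
      ((u : ℤ) - c i - ((k : ℤ) - 1 - (i : ℕ))) + (i : ℕ) := by
  classical
  have hik := i.isLt
  have hk1 : k - 1 < k := by omega
  -- the value at the special index, and the basic bound `v + (k-1-i) ≤ u`
  set v := c i with hv
  have hgap : v + ((k-1) - (i:ℕ)) ≤ u := by
    have h1 := CHP.fin_gap_nat hc.1.1 ((k-1) - (i:ℕ)) i ⟨k-1, hk1⟩ (by simp; omega)
    have h2 := hc.1.2.2.1 ⟨k-1, hk1⟩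
    omega
  have hva : a i < v := hi.1
  have haigap : (i:ℕ) + 1 ≤ a i := by
    have h1 := CHP.fin_gap_nat ha (i:ℕ) ⟨0, by omega⟩ i (by simp)
    have h2 := ha1 ⟨0, by omega⟩
    omega
  set p := u - ((k-1) - (i:ℕ)) - v with hp
  set P := p + (i:ℕ) with hP
  have hT : (v + p) + k = u + (i:ℕ) + 1 := by omega
  set S := {m : ℕ | ∃ f : Fin (m + 1) → (Fin k → ℕ),
    f 0 = c ∧ (∀ t, joinIrredD1 u a (f t)) ∧ StrictMono f} with hS
  -- upper bound
  have hub : ∀ m ∈ S, m ≤ P := by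
    rintro m ⟨f, hf0, hfJ, hfM⟩
    choose idx hidx using fun t => CHP.exists_special ha (hfJ t)
    have hg : StrictMono (fun t => (f t (idx t) : ℤ) - 2 * ((idx t : ℕ) : ℤ)) := by
      intro t t' htt
      exact CHP.W_dec ha ha1 (hfJ t) (hidx t) (hfJ t') (hidx t') (hfM htt)
    have hgap2 : (f 0 (idx 0) : ℤ) - 2 * ((idx 0 : ℕ) : ℤ) + m ≤
        (f ⟨m, by omega⟩ (idx ⟨m, by omega⟩) : ℤ) -
          2 * ((idx ⟨m, by omega⟩ : ℕ) : ℤ) :=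
      CHP.fin_gap_int hg m 0 ⟨m, by omega⟩ (by simp)
    have hidx0 : idx 0 = i := by
      refine CHP.special_unique ha1 hc hi ?_
      rw [← hf0]
      exact hidx 0
    have he0 : f 0 (idx 0) = v := by rw [hidx0, hf0]
    have htop : f ⟨m, by omega⟩ (idx ⟨m, by omega⟩) +
        ((k-1) - ((idx ⟨m, by omega⟩ : Fin k) : ℕ)) ≤ u := by
      have h1 := CHP.fin_gap_nat (hfJ ⟨m, by omega⟩).1.1
        ((k-1) - ((idx ⟨m, by omega⟩ : Fin k) : ℕ)) (idx ⟨m, by omega⟩)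
        ⟨k-1, hk1⟩ (by simp; omega)
      have h2 := (hfJ ⟨m, by omega⟩).1.2.2.1 ⟨k-1, hk1⟩
      omega
    have hilt := (idx ⟨m, by omega⟩).isLt
    omega
  -- lower bound: exhibit an explicit chain of length `P`
  have hmem : P ∈ S := by
    refine ⟨fun s => if h : (s:ℕ) ≤ p then JF a i (v + (s:ℕ)) else
      JF a ⟨(i:ℕ) - ((s:ℕ) - p), lt_of_le_of_lt (Nat.sub_le _ _) i.isLt⟩
        (v + p - ((s:ℕ) - p)), ?_, ?_, ?_⟩
    · -- starts at c
      beta_reduce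
      simp only [Fin.val_zero]
      simp only [Nat.zero_le, ↓reduceDIte, Nat.add_zero]
      refine (CHP.eq_of_special ha ha1 hc hi ?_ ?_ ?_).symm
      · exact CHP.JF_irred ha ha1 hau hva (by omega)
      · exact CHP.JF_special ha hva
      · rw [JF_self]
    · -- all chain members are join-irreducible
      intro t
      beta_reduce
      by_cases h : (t:ℕ) ≤ p
      · rw [dif_pos h]
        exact CHP.JF_irred ha ha1 hau (by omega) (by omega)
      · rw [dif_neg h]
        have htP := t.isLt
        have hr1 : 1 ≤ (t:ℕ) - p := by omega
        have hr2 : (t:ℕ) - p ≤ (i:ℕ) := by omega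
        have hagap : a ⟨(i:ℕ) - ((t:ℕ) - p), lt_of_le_of_lt (Nat.sub_le _ _) i.isLt⟩
            + ((t:ℕ) - p) ≤ a i := by
          refine CHP.fin_gap_nat ha _ _ _ ?_
          simp
          omega
        refine CHP.JF_irred ha ha1 hau (by omega) (by simp; omega)
    · -- strictly increasing
      refine CHP.strictMono_fin ?_
      intro m hm
      beta_reduce
      simp only [Fin.val_mk]
      by_cases h1 : m + 1 ≤ p
      · rw [dif_pos (by omega : m ≤ p), dif_pos h1]
        have hle : JF a i (v + m) ≤ JF a i (v + (m+1)) := by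
          intro j
          show Jaux (Af a) (i:ℕ) (v + m) (j:ℕ) ≤ Jaux (Af a) (i:ℕ) (v + (m+1)) (j:ℕ)
          exact CHP.Jaux_mono (by omega) _
        refine lt_of_le_of_ne hle ?_
        intro hEq
        have := congrFun hEq i
        rw [JF_self, JF_self] at this
        omega
      · have hm' : m + 1 < P + 1 := hm
        have hi1 : 1 ≤ (i:ℕ) := by omega
        by_cases h2 : m ≤ p
        · -- boundary step  m = p
          have hmp : m = p := by omega
          rw [dif_pos h2, dif_neg (by omega)]
          have eI : (⟨(i:ℕ) - ((m+1) - p), lt_of_le_of_lt (Nat.sub_le _ _) i.isLt⟩ :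
              Fin k) = ⟨(i:ℕ) - 1, by omega⟩ := Fin.ext (by simp; omega)
          have eW : v + p - ((m+1) - p) = v + p - 1 := by omega
          have eV : v + m = v + p := by omega
          rw [eI, eW, eV]
          have hagap : a ⟨(i:ℕ) - 1, by omega⟩ + 1 ≤ a i := by
            refine CHP.fin_gap_nat ha 1 _ _ ?_
            simp
            omega
          refine CHP.JF_step hau ?_ ?_ ?_ ?_
          · simp; omega
          · omega
          · exact hT
          · omega
        · -- generic descending step
          rw [dif_neg h2, dif_neg (by omega)]
          have hr2 : (m+1) - p ≤ (i:ℕ) := by omega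
          have hagap : a ⟨(i:ℕ) - ((m+1) - p), lt_of_le_of_lt (Nat.sub_le _ _) i.isLt⟩
              + ((m+1) - p) ≤ a i := by
            refine CHP.fin_gap_nat ha _ _ _ ?_
            simp
            omega
          refine CHP.JF_step hau ?_ ?_ ?_ ?_
          · simp; omega
          · omega
          · simp; omega
          · omega
  have hSne : S.Nonempty := ⟨P, hmem⟩
  have hbdd : BddAbove S := ⟨P, fun m hm => hub m hm⟩
  have hco : coheightP1 u a c = sSup S := rfl
  have hfin : sSup S = P := le_antisymm (csSup_le hSne hub) (le_csSup hbdd hmem)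
  rw [hco, hfin]
  omega
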